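/- Let σ > 0, let A, pap, and C be as in the setup, let z : A → ℝ, and let B = {y : A → ℝ | ∀ a, z_a − 1/2 ≤ y_a ≤ z_a + 1/2} be the box of scores consistent with the quantized scores. Define M : (A → ℝ) → ℝ by M(y) = sup over x : P → ℝ of Σ_{a ∈ A} log( (1/(σ·√(2π))) · exp( −(y_a − x_{pap a})² / (2σ²) ) ). Then for y* ∈ B: y* minimizes C over B (i.e., C(y*) ≤ C(y) for all y ∈ B) if and only if y* maximizes M over B (i.e., M(y*) ≥ M(y) for all y ∈ B). -/

import Mathlib

open Finset

lemma mean_min {A : Type*} (s : Finset A) (hs : s.Nonempty)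
    (y : A → ℝ) (t : ℝ) :
    ∑ a ∈ s, (y a - (∑ a' ∈ s, y a') / (s.card : ℝ)) ^ 2 ≤ ∑ a ∈ s, (y a - t) ^ 2 := by
  set m : ℝ := (∑ a' ∈ s, y a') / (s.card : ℝ) with hm
  have hcard : (0 : ℝ) < (s.card : ℝ) := by exact_mod_cast hs.card_pos
  have hzero : ∑ a ∈ s, (y a - m) = 0 := by
    rw [Finset.sum_sub_distrib, Finset.sum_const, nsmul_eq_mul, hm]
    field_simp
    ring
  have hexp : ∑ a ∈ s, (y a - t) ^ 2
      = ∑ a ∈ s, (y a - m) ^ 2 + 2 * (m - t) * ∑ a ∈ s, (y a - m)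
        + (s.card : ℝ) * (m - t) ^ 2 := by
    calc ∑ a ∈ s, (y a - t) ^ 2
        = ∑ a ∈ s, ((y a - m) ^ 2 + 2 * (m - t) * (y a - m) + (m - t) ^ 2) :=
          Finset.sum_congr rfl (fun a _ => by ring)
      _ = _ := by
          rw [Finset.sum_add_distrib, Finset.sum_add_distrib, ← Finset.mul_sum,
            Finset.sum_const, nsmul_eq_mul]
  rw [hzero] at hexp
  nlinarith [mul_nonneg hcard.le (sq_nonneg (m - t))]

/-- Proposition 3: over the quantization box `B`, a point `y*` minimizes the consensus
objective `C` if and only if it maximizes the profile log-likelihood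
`M(y) = sup_x L(y, x)` of the Thurstone model with quantization. -/
theorem stmt_16 {A P : Type*} [Fintype A] [Nonempty A] [Fintype P] [DecidableEq P]
    (σ : ℝ) (hσ : 0 < σ)
    (pap : A → P) (hsurj : ∀ p : P, ∃ a : A, pap a = p)
    (C : (A → ℝ) → ℝ)
    (hC : ∀ y : A → ℝ,
      C y = ∑ a, (y a -
        (∑ a' ∈ Finset.univ.filter (fun a' => pap a' = pap a), y a') /
          ((Finset.univ.filter (fun a' => pap a' = pap a)).card : ℝ)) ^ 2)
    (z : A → ℝ)
    (B : Set (A → ℝ))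
    (hB : B = {y : A → ℝ | ∀ a, z a - 1/2 ≤ y a ∧ y a ≤ z a + 1/2})
    (L : (A → ℝ) → (P → ℝ) → ℝ)
    (hL : ∀ (y : A → ℝ) (x : P → ℝ),
      L y x = ∑ a, Real.log ((1 / (σ * Real.sqrt (2 * Real.pi))) *
        Real.exp (-(y a - x (pap a)) ^ 2 / (2 * σ ^ 2))))
    (M : (A → ℝ) → ℝ)
    (hM : ∀ y : A → ℝ, M y = ⨆ x : P → ℝ, L y x)
    (ystar : A → ℝ) (hystar : ystar ∈ B) :
    (∀ y ∈ B, C ystar ≤ C y) ↔ (∀ y ∈ B, M y ≤ M ystar) := by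
  set c : ℝ := 1 / (σ * Real.sqrt (2 * Real.pi)) with hcdef
  have hc : 0 < c := by
    have : 0 < Real.sqrt (2 * Real.pi) := Real.sqrt_pos.mpr (by positivity)
    positivity
  have h2σ : (0 : ℝ) < 2 * σ ^ 2 := by positivity
  -- rewrite L
  have hL' : ∀ (y : A → ℝ) (x : P → ℝ),
      L y x = (Fintype.card A : ℝ) * Real.log c
        - (∑ a, (y a - x (pap a)) ^ 2) / (2 * σ ^ 2) := by
    intro y x
    rw [hL]
    have hterm : ∀ a : A,
        Real.log (c * Real.exp (-(y a - x (pap a)) ^ 2 / (2 * σ ^ 2)))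
        = Real.log c + (-(y a - x (pap a)) ^ 2 / (2 * σ ^ 2)) := fun a => by
      rw [Real.log_mul (ne_of_gt hc) (Real.exp_ne_zero _), Real.log_exp]
    rw [Finset.sum_congr rfl (fun a _ => hterm a), Finset.sum_add_distrib,
      Finset.sum_const, nsmul_eq_mul, Finset.card_univ]
    have : ∑ a : A, -(y a - x (pap a)) ^ 2 / (2 * σ ^ 2)
        = -((∑ a : A, (y a - x (pap a)) ^ 2) / (2 * σ ^ 2)) := by
      rw [← Finset.sum_div, Finset.sum_neg_distrib, neg_div]
    rw [this]; ring
  -- the maximizing x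
  set xhat : (A → ℝ) → P → ℝ := fun y p =>
    (∑ a' ∈ Finset.univ.filter (fun a' => pap a' = p), y a') /
      ((Finset.univ.filter (fun a' => pap a' = p)).card : ℝ) with hxhat
  have hfib : ∀ p : P, (Finset.univ.filter (fun a' => pap a' = p)).Nonempty := by
    intro p
    obtain ⟨a, ha⟩ := hsurj p
    exact ⟨a, by simp [ha]⟩
  have hCx : ∀ y : A → ℝ, ∑ a, (y a - xhat y (pap a)) ^ 2 = C y := by
    intro y; rw [hC]
  have hmin : ∀ (y : A → ℝ) (x : P → ℝ), C y ≤ ∑ a, (y a - x (pap a)) ^ 2 := by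
    intro y x
    rw [← hCx y,
      ← Finset.sum_fiberwise Finset.univ pap (fun a => (y a - xhat y (pap a)) ^ 2),
      ← Finset.sum_fiberwise Finset.univ pap (fun a => (y a - x (pap a)) ^ 2)]
    refine Finset.sum_le_sum fun p _ => ?_
    refine le_trans (le_of_eq ?_) (le_trans (mean_min _ (hfib p) y (x p)) (le_of_eq ?_))
    · exact Finset.sum_congr rfl fun a ha => by rw [(Finset.mem_filter.mp ha).2]
    · exact Finset.sum_congr rfl fun a ha => by rw [(Finset.mem_filter.mp ha).2]
  have hbdd : ∀ (y : A → ℝ) (x : P → ℝ), L y x ≤ L y (xhat y) := by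
    intro y x
    rw [hL', hL', hCx]
    gcongr
    exact hmin y x
  have hMy : ∀ y : A → ℝ,
      M y = (Fintype.card A : ℝ) * Real.log c - C y / (2 * σ ^ 2) := by
    intro y
    rw [hM]
    apply le_antisymm
    · exact ciSup_le fun x => (hbdd y x).trans_eq (by rw [hL', hCx])
    · have hb : BddAbove (Set.range (L y)) :=
        ⟨L y (xhat y), by rintro _ ⟨x, rfl⟩; exact hbdd y x⟩
      calc (Fintype.card A : ℝ) * Real.log c - C y / (2 * σ ^ 2)
          = L y (xhat y) := by rw [hL', hCx]
        _ ≤ ⨆ x : P → ℝ, L y x := le_ciSup hb (xhat y)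
  constructor
  · intro h y hy
    rw [hMy, hMy]
    gcongr
    exact h y hy
  · intro h y hy
    have h1 := h y hy
    rw [hMy, hMy] at h1
    have : C ystar / (2 * σ ^ 2) ≤ C y / (2 * σ ^ 2) := by linarith
    exact (div_le_div_iff_of_pos_right h2σ).mp this
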